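/- arXiv:1104.3301 — 2 statements merged into one kernel-verified Lean document; each statement's English description precedes it below -/
import Mathlib

section
/- Let U ⊆ ℝ × ℝ³ be open and let d : ℝ × ℝ³ → ℝ³ and u : ℝ × ℝ³ → ℝ³ be such that d is continuously differentiable in the time variable t and twice continuously differentiable in the space variable x on U. Assume that on U the pair solves the harmonic map heat flow equation ∂ₜd − Δd − |∇d|²d + (u·∇)d = 0, where Δ and ∇ act in the space variables only, |∇d|² = Σᵢ ‖∂ᵢd‖², and (u·∇)d = Σᵢ uᵢ ∂ᵢd. Then the scalar function f(t,x) = ‖d(t,x)‖² − 1 satisfies, at every point of U, the linear parabolic equation ∂ₜf − Δf − 2|∇d|² f + (u·∇)f = 0. -/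
open scoped BigOperators
open RealInnerProductSpace

noncomputable section

/-- Time derivative `∂ₜ g` of a function of `(t, x) ∈ ℝ × ℝ³`. -/
def pt {F : Type*} [NormedAddCommGroup F] [NormedSpace ℝ F]
    (g : ℝ × EuclideanSpace ℝ (Fin 3) → F) (p : ℝ × EuclideanSpace ℝ (Fin 3)) : F :=
  deriv (fun s => g (s, p.2)) p.1

/-- Spatial partial derivative `∂ᵢ g` of a function of `(t, x) ∈ ℝ × ℝ³`,
in the standard direction `eᵢ`. -/
def pd {F : Type*} [NormedAddCommGroup F] [NormedSpace ℝ F]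
    (g : ℝ × EuclideanSpace ℝ (Fin 3) → F) (i : Fin 3)
    (p : ℝ × EuclideanSpace ℝ (Fin 3)) : F :=
  fderiv ℝ (fun y => g (p.1, y)) p.2 (EuclideanSpace.single i 1)

local notation "E3" => EuclideanSpace ℝ (Fin 3)

lemma fderiv_normsq_sub_one {D : E3 → E3} {y : E3} (hD : DifferentiableAt ℝ D y) (v : E3) :
    fderiv ℝ (fun z => ‖D z‖ ^ 2 - 1) y v = 2 * ⟪D y, fderiv ℝ D y v⟫ := by
  have h : (fun z => ‖D z‖ ^ 2 - 1) = fun z => ⟪D z, D z⟫ - (1:ℝ) := by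
    funext z; rw [real_inner_self_eq_norm_sq]
  rw [h, fderiv_sub_const, fderiv_inner_apply ℝ hD hD, real_inner_comm]
  ring

lemma deriv_normsq_sub_one {g : ℝ → E3} {t : ℝ} (hg : DifferentiableAt ℝ g t) :
    deriv (fun s => ‖g s‖ ^ 2 - 1) t = 2 * ⟪g t, deriv g t⟫ := by
  have h : (fun s => ‖g s‖ ^ 2 - 1) = fun s => ⟪g s, g s⟫ - (1:ℝ) := by
    funext s; rw [real_inner_self_eq_norm_sq]
  rw [h, deriv_sub_const, deriv_inner_apply ℝ hg hg, real_inner_comm]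
  ring

/-- If `d` is `C¹` in time and `C²` in space on an open set
`U ⊆ ℝ × ℝ³` and solves `∂ₜd − Δd − |∇d|²d + (u·∇)d = 0` on `U`, then
`f = ‖d‖² − 1` solves the linear parabolic equation
`∂ₜf − Δf − 2|∇d|²f + (u·∇)f = 0` on `U`. -/
theorem norm_sq_sub_one_parabolic
    (U : Set (ℝ × EuclideanSpace ℝ (Fin 3))) (hU : IsOpen U)
    (d u : ℝ × EuclideanSpace ℝ (Fin 3) → EuclideanSpace ℝ (Fin 3))
    (hdt : ∀ p ∈ U, ContDiffAt ℝ 1 (fun s => d (s, p.2)) p.1)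
    (hdx : ∀ p ∈ U, ContDiffAt ℝ 2 (fun y => d (p.1, y)) p.2)
    (hpde : ∀ p ∈ U,
      pt d p - (∑ i, pd (pd d i) i p) - (∑ i, ‖pd d i p‖ ^ 2) • d p
        + (∑ i, u p i • pd d i p) = 0) :
    ∀ p ∈ U,
      pt (fun q => ‖d q‖ ^ 2 - 1) p
        - (∑ i, pd (pd (fun q => ‖d q‖ ^ 2 - 1) i) i p)
        - 2 * (∑ i, ‖pd d i p‖ ^ 2) * (‖d p‖ ^ 2 - 1)
        + (∑ i, u p i • pd (fun q => ‖d q‖ ^ 2 - 1) i p) = 0 := by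
  intro p hp
  classical
  set D : E3 → E3 := fun y => d (p.1, y) with hDdef
  have hD2 : ContDiffAt ℝ 2 D p.2 := hdx p hp
  set Φ : E3 → (E3 →L[ℝ] E3) := fun y => fderiv ℝ D y with hΦdef
  have hΦ1 : ContDiffAt ℝ 1 Φ p.2 := hD2.fderiv_right le_rfl
  have hΦd : DifferentiableAt ℝ Φ p.2 := hΦ1.differentiableAt one_ne_zero
  have hDd : DifferentiableAt ℝ D p.2 := hD2.differentiableAt two_ne_zero
  set e : Fin 3 → E3 := fun i => EuclideanSpace.single i 1 with hedef
  -- time derivative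
  have hTd : DifferentiableAt ℝ (fun s => d (s, p.2)) p.1 :=
    (hdt p hp).differentiableAt one_ne_zero
  have ht : pt (fun q => ‖d q‖ ^ 2 - 1) p = 2 * ⟪d p, pt d p⟫ :=
    deriv_normsq_sub_one hTd
  -- first spatial derivative at p
  have h1 : ∀ i, pd (fun q => ‖d q‖ ^ 2 - 1) i p = 2 * ⟪d p, pd d i p⟫ := fun i =>
    fderiv_normsq_sub_one hDd (e i)
  -- second spatial derivative
  have key : ∀ i, pd (pd (fun q => ‖d q‖ ^ 2 - 1) i) i p
      = 2 * ‖pd d i p‖ ^ 2 + 2 * ⟪d p, pd (pd d i) i p⟫ := by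
    intro i
    -- eventual equality on the slice
    have hV : IsOpen {y : E3 | (p.1, y) ∈ U} := hU.preimage (Continuous.prodMk_right p.1)
    have hmem : p.2 ∈ {y : E3 | (p.1, y) ∈ U} := hp
    have heq : (fun y => pd (fun q => ‖d q‖ ^ 2 - 1) i (p.1, y))
        =ᶠ[nhds p.2] (fun y => 2 * ⟪D y, Φ y (e i)⟫) := by
      filter_upwards [hV.mem_nhds hmem] with y hy
      have hDy : DifferentiableAt ℝ D y :=
        (hdx (p.1, y) hy).differentiableAt two_ne_zero
      exact fderiv_normsq_sub_one hDy (e i)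
    -- derivative of y ↦ Φ y (e i)
    have hA : HasFDerivAt (fun y => Φ y (e i))
        ((Φ p.2).comp (0 : E3 →L[ℝ] E3) + (fderiv ℝ Φ p.2).flip (e i)) p.2 :=
      hΦd.hasFDerivAt.clm_apply (hasFDerivAt_const (e i) p.2)
    have hB : pd (pd d i) i p = fderiv ℝ Φ p.2 (e i) (e i) := by
      have : pd (pd d i) i p = fderiv ℝ (fun y => Φ y (e i)) p.2 (e i) := rfl
      rw [this, hA.fderiv]; simp
    have hD' : HasFDerivAt D (Φ p.2) p.2 := hDd.hasFDerivAt
    have hI := ((hD'.inner ℝ hA).const_mul (2:ℝ)).fderiv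
    calc pd (pd (fun q => ‖d q‖ ^ 2 - 1) i) i p
        = fderiv ℝ (fun y => 2 * ⟪D y, Φ y (e i)⟫) p.2 (e i) := by
          show fderiv ℝ (fun y => pd (fun q => ‖d q‖ ^ 2 - 1) i (p.1, y)) p.2 (e i) = _
          rw [heq.fderiv_eq]
      _ = 2 * ‖pd d i p‖ ^ 2 + 2 * ⟪d p, pd (pd d i) i p⟫ := by
          rw [hI, hB]
          simp only [ContinuousLinearMap.smul_apply, ContinuousLinearMap.comp_apply,
            ContinuousLinearMap.add_apply, fderivInnerCLM_apply, ContinuousLinearMap.prod_apply,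
            ContinuousLinearMap.flip_apply, ContinuousLinearMap.zero_apply, map_zero,
            inner_zero_right, smul_eq_mul, zero_add]
          have hpd : pd d i p = Φ p.2 (e i) := rfl
          rw [hpd, ← real_inner_self_eq_norm_sq]
          have : D p.2 = d p := rfl
          rw [this]
          ring
  -- combine
  have h0 : ⟪d p, pt d p - (∑ i, pd (pd d i) i p) - (∑ i, ‖pd d i p‖ ^ 2) • d p
      + (∑ i, u p i • pd d i p)⟫ = 0 := by
    rw [hpde p hp, inner_zero_right]
  simp only [inner_add_right, inner_sub_right, inner_smul_right, inner_sum,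
    real_inner_self_eq_norm_sq] at h0
  rw [ht]
  simp only [key, h1, smul_eq_mul]
  rw [Finset.sum_add_distrib, ← Finset.mul_sum, ← Finset.mul_sum]
  have s2 : ∑ i, u p i * (2 * ⟪d p, pd d i p⟫) = 2 * ∑ i, u p i * ⟪d p, pd d i p⟫ := by
    rw [Finset.mul_sum]; exact Finset.sum_congr rfl fun i _ => by ring
  rw [s2]
  linear_combination 2 * h0
end
end

section
/- Let C > 0 and a ≥ 0 be real numbers with 32C²a ≤ 1, let T > 0 (possibly T = ∞), and let f : ℝ → ℝ be continuous and nonnegative on [0,T). Assume that f(t) ≤ C(a + 4f(t)²) for all t ∈ [0,T), and that f(0) ≤ 2Ca. Then for every t ∈ [0,T) one has f(t) ≤ (1 − √(1 − 16C²a))/(8C), and in particular f(t) ≤ 2Ca. -/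
/-- Bootstrap (continuation) lemma: let `C > 0`, `a ≥ 0` with
`32C²a ≤ 1`, `T > 0` (possibly `T = ∞`, modeled as `T : EReal`), and let
`f : ℝ → ℝ` be continuous and nonnegative on `[0, T)`. If `f t ≤ C(a + 4 f t²)`
on `[0, T)` and `f 0 ≤ 2Ca`, then `f t ≤ (1 − √(1 − 16C²a))/(8C)` on `[0, T)`,
and in particular `f t ≤ 2Ca`. -/
theorem bootstrap_lemma
    (C a : ℝ) (hC : 0 < C) (ha : 0 ≤ a) (hsmall : 32 * C ^ 2 * a ≤ 1)
    (T : EReal) (hT : 0 < T) (f : ℝ → ℝ)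
    (hf : ContinuousOn f {t : ℝ | 0 ≤ t ∧ (t : EReal) < T})
    (hnonneg : ∀ t : ℝ, 0 ≤ t → (t : EReal) < T → 0 ≤ f t)
    (hquad : ∀ t : ℝ, 0 ≤ t → (t : EReal) < T → f t ≤ C * (a + 4 * f t ^ 2))
    (h0 : f 0 ≤ 2 * C * a) :
    ∀ t : ℝ, 0 ≤ t → (t : EReal) < T →
      f t ≤ (1 - Real.sqrt (1 - 16 * C ^ 2 * a)) / (8 * C) ∧ f t ≤ 2 * C * a := by
  have hC2 : (0:ℝ) < C ^ 2 := by positivity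
  have hDnn : (0:ℝ) ≤ 1 - 16 * C ^ 2 * a := by nlinarith
  set s : ℝ := Real.sqrt (1 - 16 * C ^ 2 * a) with hs_def
  have hs2 : s ^ 2 = 1 - 16 * C ^ 2 * a := Real.sq_sqrt hDnn
  have hsnn : 0 ≤ s := Real.sqrt_nonneg _
  have hs_half : (1:ℝ)/2 ≤ s ^ 2 := by rw [hs2]; nlinarith
  have hs_pos : 0 < s := by nlinarith
  have hs_le1 : s ≤ 1 := by nlinarith
  set xm : ℝ := (1 - s) / (8 * C) with hxm
  set xp : ℝ := (1 + s) / (8 * C) with hxp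
  have h8C : (0:ℝ) < 8 * C := by linarith
  -- xm ≤ 2Ca
  have hxm_le : xm ≤ 2 * C * a := by
    rw [hxm, div_le_iff₀ h8C]; nlinarith
  -- 2Ca < xp
  have h2Ca_lt : 2 * C * a < xp := by
    rw [hxp, lt_div_iff₀ h8C]; nlinarith
  -- dichotomy
  have dich : ∀ y : ℝ, 0 ≤ y → y ≤ C * (a + 4 * y ^ 2) → y ≤ xm ∨ xp ≤ y := by
    intro y hy hq
    by_contra h
    push_neg at h
    obtain ⟨h1, h2⟩ := h
    rw [hxm, div_lt_iff₀ h8C] at h1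
    rw [hxp, lt_div_iff₀ h8C] at h2
    nlinarith [mul_pos (sub_pos.mpr h1) (sub_pos.mpr h2)]
  -- f 0 ≤ xm
  have hT0 : ((0:ℝ) : EReal) < T := by simpa using hT
  have hf0 : f 0 ≤ xm := by
    rcases dich (f 0) (hnonneg 0 le_rfl hT0) (hquad 0 le_rfl hT0) with h | h
    · exact h
    · linarith
  intro t ht htT
  -- [0, t] ⊆ domain
  have hsub : Set.Icc (0:ℝ) t ⊆ {u : ℝ | 0 ≤ u ∧ (u : EReal) < T} := by
    intro u hu
    exact ⟨hu.1, lt_of_le_of_lt (EReal.coe_le_coe_iff.mpr hu.2) htT⟩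
  have hmain : f t ≤ xm := by
    rcases dich (f t) (hnonneg t ht htT) (hquad t ht htT) with h | h
    · exact h
    · exfalso
      -- IVT: there is u ∈ [0,t] with f u = (xm+xp)/2
      have hcont : ContinuousOn f (Set.Icc 0 t) := hf.mono hsub
      have hmid : (xm + xp) / 2 ∈ Set.Icc (f 0) (f t) := by
        constructor <;> [linarith; linarith]
      obtain ⟨u, hu, hfu⟩ := intermediate_value_Icc ht hcont hmid
      rcases dich (f u) (hnonneg u hu.1 (hsub hu).2)
          (hquad u hu.1 (hsub hu).2) with h' | h' <;> rw [hfu] at h' <;> linarith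
  exact ⟨hmain, le_trans hmain hxm_le⟩
end
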